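/- Let a ∈ ℝ with a ∉ {0, 1}, λ := a/(1 − a), and M := {(z¹, z²) ∈ ℂ² : |Re z¹| < 1 and |z²| < 1}. On ℂ³ define X₀(w,z) := (i, 0, 0), X₁ := (0, i, 0), X₂ := (0, 0, i), X₃(w,z) := (1/2)(0, z¹ + 1, −λ(z² + 1)), X₄(w,z) := (1/2)(2a(w + 2), z¹ + 1, λ(z² + 1)). Then at every point p ∈ ℂ × M the five vectors X₀(p), X₁(p), X₂(p), X₃(p), X₄(p) ∈ ℂ³ are linearly independent over ℝ. Consequently, with F(w,z) := Re w − ρ_a(z) + 2 and ρ_a(z¹,z²) := 2(Re z¹ + 1)^a (Re z² + 1)^{1−a}, at every point p of S_a := {p ∈ ℂ × M : F(p) = 0} the values X₀(p),…,X₄(p) span the 5-dimensional real tangent space ker dF_p of the hypersurface S_a. -/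

import Mathlib

open ContinuousLinearMap in
private noncomputable def stmtL0 : (ℂ × ℂ × ℂ) →L[ℝ] ℝ := Complex.reCLM.comp (fst ℝ ℂ (ℂ × ℂ))
open ContinuousLinearMap in
private noncomputable def stmtL1 : (ℂ × ℂ × ℂ) →L[ℝ] ℝ :=
  Complex.reCLM.comp ((fst ℝ ℂ ℂ).comp (snd ℝ ℂ (ℂ × ℂ)))
open ContinuousLinearMap in
private noncomputable def stmtL2 : (ℂ × ℂ × ℂ) →L[ℝ] ℝ :=
  Complex.reCLM.comp ((snd ℝ ℂ ℂ).comp (snd ℝ ℂ (ℂ × ℂ)))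

private noncomputable def stmtD (a x y : ℝ) : (ℂ × ℂ × ℂ) →L[ℝ] ℝ :=
  stmtL0 - (2:ℝ) • (((x + 1) ^ a) • (((1-a) * (y + 1) ^ (1 - a - 1)) • stmtL2)
        + ((y + 1) ^ (1-a)) • ((a * (x + 1) ^ (a - 1)) • stmtL1))

private theorem stmtD_apply (a x y : ℝ) (v : ℂ × ℂ × ℂ) :
    stmtD a x y v = v.1.re - 2 * ((x + 1) ^ a * ((1-a) * (y + 1) ^ (1 - a - 1) * v.2.2.re)
      + (y + 1) ^ (1-a) * (a * (x + 1) ^ (a - 1) * v.2.1.re)) := by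
  simp [stmtD, stmtL0, stmtL1, stmtL2, ContinuousLinearMap.sub_apply,
    ContinuousLinearMap.add_apply, ContinuousLinearMap.smul_apply, smul_eq_mul]
  ring

private theorem stmtD_hasFDerivAt (a : ℝ) (F : ℂ × ℂ × ℂ → ℝ)
    (hF : ∀ p : ℂ × ℂ × ℂ, F p = p.1.re - 2 * (p.2.1.re + 1) ^ a * (p.2.2.re + 1) ^ (1 - a) + 2)
    (p : ℂ × ℂ × ℂ) (hx : 0 < p.2.1.re + 1) (hy : 0 < p.2.2.re + 1) :
    HasFDerivAt F (stmtD a p.2.1.re p.2.2.re) p := by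
  have hFfun : F = fun p : ℂ × ℂ × ℂ =>
      p.1.re - 2 * ((p.2.1.re + 1) ^ a * (p.2.2.re + 1) ^ (1 - a)) + 2 := by
    funext q; rw [hF q]; ring
  rw [hFfun]
  have h0 : HasFDerivAt (fun p : ℂ × ℂ × ℂ => p.1.re) stmtL0 p := stmtL0.hasFDerivAt
  have g1 : HasFDerivAt (fun p : ℂ × ℂ × ℂ => p.2.1.re + 1) stmtL1 p := by
    exact stmtL1.hasFDerivAt.add_const (1:ℝ)
  have g2 : HasFDerivAt (fun p : ℂ × ℂ × ℂ => p.2.2.re + 1) stmtL2 p := by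
    exact stmtL2.hasFDerivAt.add_const (1:ℝ)
  have f1 : HasFDerivAt (fun p : ℂ × ℂ × ℂ => (p.2.1.re + 1) ^ a)
      ((a * (p.2.1.re + 1) ^ (a - 1)) • stmtL1) p := g1.rpow_const (Or.inl (ne_of_gt hx))
  have f2 : HasFDerivAt (fun p : ℂ × ℂ × ℂ => (p.2.2.re + 1) ^ (1 - a))
      (((1 - a) * (p.2.2.re + 1) ^ (1 - a - 1)) • stmtL2) p := g2.rpow_const (Or.inl (ne_of_gt hy))
  exact (h0.sub ((f1.mul f2).const_mul 2)).add_const 2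

private theorem stmtD_finrank_ker (a x y : ℝ) :
    Module.finrank ℝ (LinearMap.ker (stmtD a x y : (ℂ × ℂ × ℂ) →ₗ[ℝ] ℝ)) = 5 := by
  have hsurj : Function.Surjective (stmtD a x y) := by
    intro r
    refine ⟨((r:ℂ), 0, 0), ?_⟩
    simp [stmtD_apply]
  have h1 := LinearMap.finrank_range_add_finrank_ker ((stmtD a x y) : (ℂ × ℂ × ℂ) →ₗ[ℝ] ℝ)
  have hrange : LinearMap.range ((stmtD a x y) : (ℂ × ℂ × ℂ) →ₗ[ℝ] ℝ) = ⊤ :=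
    LinearMap.range_eq_top.mpr hsurj
  rw [hrange] at h1
  have h6 : Module.finrank ℝ (ℂ × ℂ × ℂ) = 6 := by
    simp [Module.finrank_prod, Complex.finrank_real_complex]
  rw [finrank_top, h6, Module.finrank_self] at h1
  have heq : LinearMap.ker ((stmtD a x y) : (ℂ × ℂ × ℂ) →ₗ[ℝ] ℝ)
      = LinearMap.ker (stmtD a x y : (ℂ × ℂ × ℂ) →ₗ[ℝ] ℝ) := rfl
  rw [heq] at h1
  omega

private theorem stmt_lin_indep (a l : ℝ) (hl0 : l ≠ 0) (w z1 z2 : ℂ)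
    (hx : 0 < z1.re + 1) (hy : 0 < z2.re + 1) :
    LinearIndependent ℝ ![((Complex.I,0,0) : ℂ × ℂ × ℂ), (0,Complex.I,0), (0,0,Complex.I),
      ((1:ℂ)/2) • (((0:ℂ), z1+1, -(l:ℂ)*(z2+1)) : ℂ × ℂ × ℂ),
      ((1:ℂ)/2) • ((2*(a:ℂ)*(w+2), z1+1, (l:ℂ)*(z2+1)) : ℂ × ℂ × ℂ)] := by
  rw [Fintype.linearIndependent_iff]
  intro g hg
  simp only [Fin.sum_univ_five, Matrix.cons_val_zero, Matrix.cons_val_one, Matrix.head_cons,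
    Matrix.cons_val_two, Matrix.tail_cons, Matrix.cons_val_three, Matrix.cons_val_four,
    Prod.smul_mk, smul_smul, Prod.mk_add_mk, Prod.mk_eq_zero] at hg
  obtain ⟨h1, h2, h3⟩ := hg
  simp only [smul_eq_mul, Complex.real_smul] at h1 h2 h3
  rw [Complex.ext_iff] at h1 h2 h3
  simp only [Complex.add_re, Complex.add_im, Complex.smul_re, Complex.smul_im, Complex.I_re,
    Complex.I_im, Complex.mul_re, Complex.mul_im, Complex.ofReal_re, Complex.ofReal_im,
    Complex.neg_re, Complex.neg_im, Complex.zero_re, Complex.zero_im, Complex.one_re,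
    Complex.one_im, Complex.div_ofNat_re, Complex.div_ofNat_im, Complex.re_ofNat,
    Complex.im_ofNat] at h1 h2 h3
  norm_num at h1 h2 h3
  obtain ⟨h1r, h1i⟩ := h1
  obtain ⟨h2r, h2i⟩ := h2
  obtain ⟨h3r, h3i⟩ := h3
  have e1 : (g 3 + g 4) * (z1.re + 1) = 0 := by linear_combination 2 * h2r
  have e2 : (g 4 - g 3) * (l * (z2.re + 1)) = 0 := by linear_combination 2 * h3r
  have hs : g 3 + g 4 = 0 := by
    rcases mul_eq_zero.mp e1 with h | h
    · exact h
    · exact absurd h (ne_of_gt hx)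
  have ht : g 4 - g 3 = 0 := by
    rcases mul_eq_zero.mp e2 with h | h
    · exact h
    · exact absurd h (mul_ne_zero hl0 (ne_of_gt hy))
  have hg3 : g 3 = 0 := by linarith
  have hg4 : g 4 = 0 := by linarith
  have hg1 : g 1 = 0 := by rw [hg3, hg4] at h2i; linarith
  have hg2 : g 2 = 0 := by rw [hg3, hg4] at h3i; linarith
  have hg0 : g 0 = 0 := by rw [hg4] at h1i; linarith
  intro i
  fin_cases i <;> assumption

/-- The infinitesimal CR symmetries `X₀,…,X₄` are linearly independent over ℝ at every
point of `ℂ × M`, and at every point of the hypersurface `S_a = {F = 0}` they span the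
5-dimensional real tangent space `ker dF_p`. -/
theorem stmt11 (a : ℝ) (ha0 : a ≠ 0) (ha1 : a ≠ 1) (l : ℝ) (hl : l = a / (1 - a))
    (X0 X1 X2 X3 X4 : ℂ × ℂ × ℂ → ℂ × ℂ × ℂ)
    (hX0 : ∀ p, X0 p = ((Complex.I, 0, 0) : ℂ × ℂ × ℂ))
    (hX1 : ∀ p, X1 p = ((0, Complex.I, 0) : ℂ × ℂ × ℂ))
    (hX2 : ∀ p, X2 p = ((0, 0, Complex.I) : ℂ × ℂ × ℂ))
    (hX3 : ∀ p : ℂ × ℂ × ℂ, X3 p =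
      ((1 : ℂ) / 2) • (((0 : ℂ), p.2.1 + 1, -(l : ℂ) * (p.2.2 + 1)) : ℂ × ℂ × ℂ))
    (hX4 : ∀ p : ℂ × ℂ × ℂ, X4 p =
      ((1 : ℂ) / 2) • ((2 * (a : ℂ) * (p.1 + 2), p.2.1 + 1, (l : ℂ) * (p.2.2 + 1)) : ℂ × ℂ × ℂ))
    (F : ℂ × ℂ × ℂ → ℝ)
    (hF : ∀ p : ℂ × ℂ × ℂ, F p = p.1.re - 2 * (p.2.1.re + 1) ^ a * (p.2.2.re + 1) ^ (1 - a) + 2) :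
    (∀ p : ℂ × ℂ × ℂ, |p.2.1.re| < 1 → ‖p.2.2‖ < 1 →
      LinearIndependent ℝ ![X0 p, X1 p, X2 p, X3 p, X4 p]) ∧
    (∀ p : ℂ × ℂ × ℂ, |p.2.1.re| < 1 → ‖p.2.2‖ < 1 → F p = 0 →
      Module.finrank ℝ ↥(LinearMap.ker (fderiv ℝ F p : ℂ × ℂ × ℂ →ₗ[ℝ] ℝ)) = 5 ∧
      Submodule.span ℝ (Set.range ![X0 p, X1 p, X2 p, X3 p, X4 p])
        = LinearMap.ker (fderiv ℝ F p : ℂ × ℂ × ℂ →ₗ[ℝ] ℝ)) := by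
  have hl0 : l ≠ 0 := by
    rw [hl]; exact div_ne_zero ha0 (sub_ne_zero.mpr (Ne.symm ha1))
  have h1a : (1:ℝ) - a ≠ 0 := sub_ne_zero.mpr (Ne.symm ha1)
  have hla : (1 - a) * l = a := by rw [hl]; field_simp
  have key_indep : ∀ p : ℂ × ℂ × ℂ, |p.2.1.re| < 1 → ‖p.2.2‖ < 1 →
      LinearIndependent ℝ ![X0 p, X1 p, X2 p, X3 p, X4 p] := by
    intro p h1 h2
    have hx : 0 < p.2.1.re + 1 := by have := abs_lt.mp h1; linarith
    have hy : 0 < p.2.2.re + 1 := by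
      have h := abs_lt.mp (lt_of_le_of_lt (Complex.abs_re_le_norm p.2.2) h2)
      linarith
    rw [hX0, hX1, hX2, hX3, hX4]
    exact stmt_lin_indep a l hl0 p.1 p.2.1 p.2.2 hx hy
  refine ⟨key_indep, ?_⟩
  intro p h1 h2 hF0
  have hx : 0 < p.2.1.re + 1 := by have := abs_lt.mp h1; linarith
  have hy : 0 < p.2.2.re + 1 := by
    have h := abs_lt.mp (lt_of_le_of_lt (Complex.abs_re_le_norm p.2.2) h2)
    linarith
  have hD := stmtD_hasFDerivAt a F hF p hx hy
  have hfd : fderiv ℝ F p = stmtD a p.2.1.re p.2.2.re := hD.fderiv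
  rw [hfd]
  refine ⟨stmtD_finrank_ker a _ _, ?_⟩
  have P1 : (p.2.1.re + 1) ^ (a-1) * (p.2.1.re + 1) = (p.2.1.re + 1) ^ a := by
    have h := Real.rpow_add hx (a-1) 1
    rw [Real.rpow_one, show (a-1+1 : ℝ) = a by ring] at h
    exact h.symm
  have P2 : (p.2.2.re + 1) ^ (1-a-1) * (p.2.2.re + 1) = (p.2.2.re + 1) ^ (1-a) := by
    have h := Real.rpow_add hy (1-a-1) 1
    rw [Real.rpow_one, show (1-a-1+1 : ℝ) = 1-a by ring] at h
    exact h.symm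
  have hw : p.1.re - 2 * (p.2.1.re + 1) ^ a * (p.2.2.re + 1) ^ (1 - a) + 2 = 0 := by
    rw [← hF p]; exact hF0
  have hle : Submodule.span ℝ (Set.range ![X0 p, X1 p, X2 p, X3 p, X4 p])
      ≤ LinearMap.ker (stmtD a p.2.1.re p.2.2.re : (ℂ × ℂ × ℂ) →ₗ[ℝ] ℝ) := by
    rw [Submodule.span_le]
    rintro _ ⟨i, rfl⟩
    fin_cases i
    · show X0 p ∈ (LinearMap.ker (stmtD a p.2.1.re p.2.2.re : (ℂ × ℂ × ℂ) →ₗ[ℝ] ℝ))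
      rw [LinearMap.mem_ker, ContinuousLinearMap.coe_coe, hX0 p, stmtD_apply]; simp
    · show X1 p ∈ (LinearMap.ker (stmtD a p.2.1.re p.2.2.re : (ℂ × ℂ × ℂ) →ₗ[ℝ] ℝ))
      rw [LinearMap.mem_ker, ContinuousLinearMap.coe_coe, hX1 p, stmtD_apply]; simp
    · show X2 p ∈ (LinearMap.ker (stmtD a p.2.1.re p.2.2.re : (ℂ × ℂ × ℂ) →ₗ[ℝ] ℝ))
      rw [LinearMap.mem_ker, ContinuousLinearMap.coe_coe, hX2 p, stmtD_apply]; simp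
    · show X3 p ∈ (LinearMap.ker (stmtD a p.2.1.re p.2.2.re : (ℂ × ℂ × ℂ) →ₗ[ℝ] ℝ))
      rw [LinearMap.mem_ker, ContinuousLinearMap.coe_coe, hX3 p, stmtD_apply]
      simp only [Prod.smul_mk, smul_eq_mul, Complex.mul_re, Complex.neg_re, Complex.neg_im,
        Complex.add_re, Complex.add_im, Complex.ofReal_re, Complex.ofReal_im, Complex.one_re,
        Complex.one_im, Complex.zero_re, Complex.zero_im, Complex.div_ofNat_re,
        Complex.div_ofNat_im, Complex.re_ofNat, Complex.im_ofNat]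
      linear_combination ((p.2.1.re + 1) ^ a * (1-a) * l) * P2
        - (a * (p.2.2.re + 1) ^ (1-a)) * P1
        + ((p.2.1.re + 1) ^ a * (p.2.2.re + 1) ^ (1-a)) * hla
    · show X4 p ∈ (LinearMap.ker (stmtD a p.2.1.re p.2.2.re : (ℂ × ℂ × ℂ) →ₗ[ℝ] ℝ))
      rw [LinearMap.mem_ker, ContinuousLinearMap.coe_coe, hX4 p, stmtD_apply]
      simp only [Prod.smul_mk, smul_eq_mul, Complex.mul_re, Complex.mul_im, Complex.neg_re,
        Complex.neg_im, Complex.add_re, Complex.add_im, Complex.ofReal_re, Complex.ofReal_im,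
        Complex.one_re, Complex.one_im, Complex.zero_re, Complex.zero_im,
        Complex.div_ofNat_re, Complex.div_ofNat_im, Complex.re_ofNat, Complex.im_ofNat]
      linear_combination (-((p.2.1.re + 1) ^ a * (1-a) * l)) * P2
        - (a * (p.2.2.re + 1) ^ (1-a)) * P1
        - ((p.2.1.re + 1) ^ a * (p.2.2.re + 1) ^ (1-a)) * hla
        + a * hw
  refine Submodule.eq_of_le_of_finrank_eq hle ?_
  rw [finrank_span_eq_card (key_indep p h1 h2), stmtD_finrank_ker]
  rfl
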